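/- (Forcing lemma used in Corollary 2.) Let R, K_ℓ, K_R be smooth with R > 0 on [a,b] (a < b), and set H = 2R'/R, θ⁺ = 2K_R + H, trK = K_ℓ + 2K_R. Suppose there are constants M ≥ 0 and τ > 0 with |K_ℓ(ℓ)| ≤ M, |H(ℓ)| ≤ M, and θ⁺(ℓ) ≤ −τ for all ℓ ∈ [a,b], and suppose τ > 3M + 2/(b − a). Then any C¹ solution k of ∂_ℓ k = −K_ℓ k² − H k + trK on [a,b] with k(a) ≤ 1 satisfies k(ℓ') < −1 for some ℓ' ∈ (a,b]. -/

import Mathlib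

open Filter Asymptotics Set Topology

/-- Mean curvature `H = 2 R' / R` of the spherically symmetric spheres. -/
noncomputable def Hf (R : ℝ → ℝ) : ℝ → ℝ := fun ℓ => 2 * deriv R ℓ / R ℓ

/-- `trK = K_ℓ + 2 K_R`. -/
def trKf (Kl KR : ℝ → ℝ) : ℝ → ℝ := fun ℓ => Kl ℓ + 2 * KR ℓ

/-- Outer expansion `θ⁺ = 2 K_R + H`. -/
noncomputable def thetaPlus (R KR : ℝ → ℝ) : ℝ → ℝ := fun ℓ => 2 * KR ℓ + Hf R ℓ

/-- Inner expansion `θ⁻ = 2 K_R − H`. -/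
noncomputable def thetaMinus (R KR : ℝ → ℝ) : ℝ → ℝ := fun ℓ => 2 * KR ℓ - Hf R ℓ

/-- Forcing lemma used in Corollary 2: if `|K_ℓ| ≤ M`, `|H| ≤ M` and `θ⁺ ≤ −τ` on
`[a,b]` with `τ > 3M + 2/(b − a)`, then any `C¹` solution of the reduced Jang
equation on `[a,b]` with `k(a) ≤ 1` drops strictly below `−1` somewhere in `(a,b]`. -/
theorem jang_forced_below_minus_one (a b : ℝ) (hab : a < b) (R Kl KR k : ℝ → ℝ)
    (hR : ContDiffOn ℝ (⊤ : ℕ∞) R (Set.Icc a b))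
    (hKl : ContDiffOn ℝ (⊤ : ℕ∞) Kl (Set.Icc a b))
    (hKR : ContDiffOn ℝ (⊤ : ℕ∞) KR (Set.Icc a b))
    (hRpos : ∀ ℓ ∈ Set.Icc a b, 0 < R ℓ)
    (M τ : ℝ) (hM : 0 ≤ M) (hτ : 0 < τ)
    (hKlbd : ∀ ℓ ∈ Set.Icc a b, |Kl ℓ| ≤ M)
    (hHbd : ∀ ℓ ∈ Set.Icc a b, |Hf R ℓ| ≤ M)
    (hθ : ∀ ℓ ∈ Set.Icc a b, thetaPlus R KR ℓ ≤ -τ)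
    (hτbig : 3 * M + 2 / (b - a) < τ)
    (hode : ∀ ℓ ∈ Set.Icc a b,
      HasDerivAt k (-(Kl ℓ) * k ℓ ^ 2 - Hf R ℓ * k ℓ + trKf Kl KR ℓ) ℓ)
    (hka : k a ≤ 1) :
    ∃ ℓ' ∈ Set.Ioc a b, k ℓ' < -1 := by
  by_contra hcon
  push_neg at hcon
  have hba : (0:ℝ) < b - a := sub_pos.mpr hab
  have hkc : ContinuousOn k (Set.Icc a b) := fun x hx =>
    ((hode x hx).continuousAt).continuousWithinAt
  -- lower bound on all of [a,b]
  have hlow : ∀ ℓ ∈ Set.Icc a b, -1 ≤ k ℓ := by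
    intro ℓ hℓ
    rcases eq_or_lt_of_le hℓ.1 with h | h
    · have hten : Tendsto k (𝓝[>] a) (𝓝 (k a)) :=
        ((hode a ⟨le_rfl, hab.le⟩).continuousAt).continuousWithinAt
      have hka' : -1 ≤ k a := by
        refine ge_of_tendsto hten ?_
        filter_upwards [Ioc_mem_nhdsGT_of_mem ⟨le_refl a, hab⟩] with t ht
        exact hcon t ht
      rwa [← h]
    · exact hcon ℓ ⟨h, hℓ.2⟩
  -- upper bound k ≤ 1 on [a,b]
  have hup : ∀ ℓ ∈ Set.Icc a b, k ℓ ≤ 1 := by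
    by_contra hbad
    push_neg at hbad
    obtain ⟨t₁, ht₁, hkt₁⟩ := hbad
    have hIccsub : Set.Icc a t₁ ⊆ Set.Icc a b := Set.Icc_subset_Icc le_rfl ht₁.2
    have hScl : IsClosed (Set.Icc a t₁ ∩ k ⁻¹' Set.Iic 1) :=
      (hkc.mono hIccsub).preimage_isClosed_of_isClosed isClosed_Icc isClosed_Iic
    have hSne : (Set.Icc a t₁ ∩ k ⁻¹' Set.Iic 1).Nonempty := ⟨a, ⟨le_rfl, ht₁.1⟩, hka⟩
    have hSbdd : BddAbove (Set.Icc a t₁ ∩ k ⁻¹' Set.Iic 1) := ⟨t₁, fun x hx => hx.1.2⟩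
    set s := sSup (Set.Icc a t₁ ∩ k ⁻¹' Set.Iic 1) with hs
    have hsS : s ∈ Set.Icc a t₁ ∩ k ⁻¹' Set.Iic 1 := hScl.csSup_mem hSne hSbdd
    have hsle : s ≤ t₁ := hsS.1.2
    have hslt : s < t₁ := lt_of_le_of_ne hsle (by
      intro heq; exact absurd (heq ▸ hsS.2) (not_le.mpr hkt₁))
    have hsmem : s ∈ Set.Icc a b := hIccsub hsS.1
    have hgt : ∀ t ∈ Set.Ioc s t₁, 1 < k t := by
      intro t ht
      by_contra hle
      push_neg at hle
      have : t ∈ Set.Icc a t₁ ∩ k ⁻¹' Set.Iic 1 :=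
        ⟨⟨hsS.1.1.trans ht.1.le, ht.2⟩, hle⟩
      exact absurd (le_csSup hSbdd this) (not_le.mpr ht.1)
    have hks1 : k s = 1 := by
      have hten : Tendsto k (𝓝[>] s) (𝓝 (k s)) :=
        ((hode s hsmem).continuousAt).continuousWithinAt
      have h1 : 1 ≤ k s := by
        refine ge_of_tendsto hten ?_
        filter_upwards [Ioc_mem_nhdsGT_of_mem ⟨le_refl s, hslt⟩] with t ht
        exact (hgt t ht).le
      exact le_antisymm hsS.2 h1
    set d := -(Kl s) * k s ^ 2 - Hf R s * k s + trKf Kl KR s with hd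
    have hder : HasDerivAt k d s := hode s hsmem
    have hdge : 0 ≤ d := by
      have hslopes : Tendsto (slope k s) (𝓝[>] s) (𝓝 d) := by
        have h2 := (hder.hasDerivWithinAt (s := Set.Ioi s))
        rw [hasDerivWithinAt_iff_tendsto_slope] at h2
        have hset : Set.Ioi s \ {s} = Set.Ioi s := by
          apply Set.diff_singleton_eq_self; simp
        rwa [hset] at h2
      refine ge_of_tendsto hslopes ?_
      filter_upwards [Ioc_mem_nhdsGT_of_mem ⟨le_refl s, hslt⟩] with t ht
      have h1 : 1 < k t := hgt t ht
      have h2 : 0 < t - s := sub_pos.mpr ht.1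
      have h3 : 0 ≤ k t - k s := by rw [hks1]; linarith
      have h4 : 0 ≤ (k t - k s) / (t - s) := div_nonneg h3 h2.le
      simpa [slope_def_field, div_eq_mul_inv, mul_comm] using h4
    have hdlt : d < 0 := by
      have hθs := hθ s hsmem
      have hHs := abs_le.mp (hHbd s hsmem)
      have hval : d = thetaPlus R KR s - 2 * Hf R s := by
        simp only [hd, hks1, trKf, thetaPlus]; ring
      have h5 : d ≤ -τ + 2 * M := by rw [hval]; linarith
      have h2 : 2 / (b - a) > 0 := div_pos (by norm_num) hba
      linarith
    linarith
  -- derivative bound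
  have hderbd : ∀ ℓ ∈ Set.Icc a b,
      -(Kl ℓ) * k ℓ ^ 2 - Hf R ℓ * k ℓ + trKf Kl KR ℓ ≤ 3 * M - τ := by
    intro ℓ hℓ
    have h1 : -1 ≤ k ℓ := hlow ℓ hℓ
    have h2 : k ℓ ≤ 1 := hup ℓ hℓ
    have hksq : 0 ≤ 1 - k ℓ ^ 2 := by nlinarith
    have hksq' : 1 - k ℓ ^ 2 ≤ 1 := by nlinarith
    have hθℓ := hθ ℓ hℓ
    have hrw : -(Kl ℓ) * k ℓ ^ 2 - Hf R ℓ * k ℓ + trKf Kl KR ℓ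
        = Kl ℓ * (1 - k ℓ ^ 2) - Hf R ℓ * (1 + k ℓ) + thetaPlus R KR ℓ := by
      simp only [trKf, thetaPlus]; ring
    rw [hrw]
    have hb1 : Kl ℓ * (1 - k ℓ ^ 2) ≤ M := by
      calc Kl ℓ * (1 - k ℓ ^ 2) ≤ |Kl ℓ| * (1 - k ℓ ^ 2) :=
            mul_le_mul_of_nonneg_right (le_abs_self _) hksq
        _ ≤ M * 1 := mul_le_mul (hKlbd ℓ hℓ) hksq' hksq hM
        _ = M := mul_one M
    have hb2 : - (Hf R ℓ * (1 + k ℓ)) ≤ 2 * M := by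
      have h1k : 0 ≤ 1 + k ℓ := by linarith
      have h1k2 : 1 + k ℓ ≤ 2 := by linarith
      have h6 : -(Hf R ℓ) * (1 + k ℓ) ≤ M * 2 := by
        calc -(Hf R ℓ) * (1 + k ℓ) ≤ |Hf R ℓ| * (1 + k ℓ) :=
              mul_le_mul_of_nonneg_right (neg_le_abs _) h1k
          _ ≤ M * 2 := mul_le_mul (hHbd ℓ hℓ) h1k2 h1k hM
      linarith
    linarith
  -- g := k + (τ - 3M) * id is antitone on [a,b]
  set c := τ - 3 * M with hc
  have hcpos : 0 < c := by
    have : 0 < 2 / (b - a) := div_pos (by norm_num) hba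
    simp only [hc]; linarith
  set g : ℝ → ℝ := fun t => k t + c * t with hg
  have hganti : AntitoneOn g (Set.Icc a b) := by
    apply antitoneOn_of_deriv_nonpos (convex_Icc a b)
    · exact hkc.add (continuousOn_const.mul continuousOn_id)
    · intro x hx
      rw [interior_Icc] at hx
      have := (hode x ⟨hx.1.le, hx.2.le⟩).add ((hasDerivAt_id x).const_mul c)
      exact this.differentiableAt.differentiableWithinAt
    · intro x hx
      rw [interior_Icc] at hx
      have hx' : x ∈ Set.Icc a b := ⟨hx.1.le, hx.2.le⟩
      have hder : HasDerivAt g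
          ((-(Kl x) * k x ^ 2 - Hf R x * k x + trKf Kl KR x) + c * 1) x :=
        (hode x hx').add ((hasDerivAt_id x).const_mul c)
      rw [hder.deriv]
      have := hderbd x hx'
      simp only [hc, mul_one]
      linarith
  have hgba : g b ≤ g a := hganti ⟨le_rfl, hab.le⟩ ⟨hab.le, le_rfl⟩ hab.le
  have hcba : 2 < c * (b - a) := by
    have h1 : 2 / (b - a) < c := by simp only [hc]; linarith
    have := (div_lt_iff₀ hba).mp h1
    linarith
  have hkb : k b < -1 := by
    have : k b + c * b ≤ k a + c * a := hgba
    nlinarith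
  exact absurd hkb (not_lt.mpr (hcon b ⟨hab, le_rfl⟩))
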